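/- arXiv:2109.01320 — 2 statements merged into one kernel-verified Lean document; each statement's English description precedes it below -/
import Mathlib

section
/- Given r > 0, for all z, u, v ∈ U with β(u,v) ≤ r, one has (1 − tanh r)/(1 + tanh r) ≤ |ρ(z,u)|/|ρ(z,v)| ≤ (1 + tanh r)/(1 − tanh r), where β is the Bergman metric on U. -/
open Complex MeasureTheory

noncomputable section

/-- The Siegel upper half-space `U ⊂ ℂ^(m+1)`, points written `z = (z', zₙ)`. -/
def Siegel (m : ℕ) : Set ((Fin m → ℂ) × ℂ) :=
  {z | ∑ j, ‖z.1 j‖ ^ 2 < z.2.im}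

/-- `ρ(z,w) = (i/2)(conj wₙ − zₙ) − z′ ⋅ conj w′`. -/
def rhoC {m : ℕ} (z w : (Fin m → ℂ) × ℂ) : ℂ :=
  Complex.I / 2 * (starRingEnd ℂ w.2 - z.2) - ∑ j, z.1 j * starRingEnd ℂ (w.1 j)

/-- `ρ(z) = Im zₙ − |z′|²`. -/
def rho {m : ℕ} (z : (Fin m → ℂ) × ℂ) : ℝ :=
  z.2.im - ∑ j, ‖z.1 j‖ ^ 2

/-- The inverse hyperbolic tangent. -/
def artanhR (x : ℝ) : ℝ := (1 / 2) * Real.log ((1 + x) / (1 - x))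

/-- The Bergman metric `β(z,w) = tanh⁻¹ √(1 − ρ(z)ρ(w)/|ρ(z,w)|²)` on the Siegel domain. -/
def bDist {m : ℕ} (z w : (Fin m → ℂ) × ℂ) : ℝ :=
  artanhR (Real.sqrt (1 - rho z * rho w / ‖rhoC z w‖ ^ 2))

/-- The Bergman metric ball `D(z,r)`. -/
def bBall {m : ℕ} (z : (Fin m → ℂ) × ℂ) (r : ℝ) : Set ((Fin m → ℂ) × ℂ) :=
  {w ∈ Siegel m | bDist z w < r}

/-! ### Auxiliary material -/

namespace RhoAux

open ComplexConjugate

variable {m : ℕ}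

/-- Scalar ("positive") component of the lift of a point to `ℂ × ℂ^{m+1}`. -/
def fz (z : (Fin m → ℂ) × ℂ) : ℂ := (1 - Complex.I * z.2) / 2

/-- Vector ("negative") component of the lift of a point to `ℂ × ℂ^{m+1}`. -/
def Fz (z : (Fin m → ℂ) × ℂ) : EuclideanSpace ℂ (Fin (m + 1)) :=
  WithLp.toLp 2 (Fin.cons ((1 + Complex.I * z.2) / 2) z.1 : Fin (m + 1) → ℂ)

lemma rhoC_repr (z w : (Fin m → ℂ) × ℂ) :
    rhoC z w = fz z * starRingEnd ℂ (fz w) - inner ℂ (Fz w) (Fz z) := by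
  simp only [rhoC, fz, Fz, PiLp.inner_apply, PiLp.toLp_apply, RCLike.inner_apply]
  rw [Fin.sum_univ_succ]
  simp only [Fin.cons_zero, Fin.cons_succ]
  have h : ∀ j : Fin m, starRingEnd ℂ (w.1 j) * z.1 j = z.1 j * starRingEnd ℂ (w.1 j) :=
    fun j => mul_comm _ _
  simp only [map_div₀, map_sub, map_add, map_one, map_mul, Complex.conj_I, Complex.conj_ofNat]
  ring

lemma rhoC_self (z : (Fin m → ℂ) × ℂ) : rhoC z z = (rho z : ℂ) := by
  have h : ∀ j : Fin m, z.1 j * (starRingEnd ℂ) (z.1 j) = ((‖z.1 j‖ ^ 2 : ℝ) : ℂ) := by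
    intro j
    rw [Complex.mul_conj, Complex.normSq_eq_norm_sq]
  simp only [rhoC, rho]
  rw [Finset.sum_congr rfl fun j _ => h j, ← Complex.ofReal_sum]
  apply Complex.ext
  · simp [Complex.div_re]; ring
  · simp [Complex.div_im]

lemma re_rhoC (z w : (Fin m → ℂ) × ℂ) : (rho z + rho w) / 2 ≤ (rhoC z w).re := by
  have habs : ∀ x : (Fin m → ℂ) × ℂ, ∑ j, ‖x.1 j‖ ^ 2 = ∑ j, Complex.normSq (x.1 j) :=
    fun x => Finset.sum_congr rfl fun j _ => Complex.sq_norm _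
  have key : (rhoC z w).re = (rho z + rho w) / 2 + (∑ j, Complex.normSq (z.1 j - w.1 j)) / 2 := by
    simp only [rhoC, rho, Complex.sub_re, Complex.re_sum, habs]
    have h1 : ∀ j ∈ (Finset.univ : Finset (Fin m)), (z.1 j * starRingEnd ℂ (w.1 j)).re =
        (Complex.normSq (z.1 j) + Complex.normSq (w.1 j) - Complex.normSq (z.1 j - w.1 j)) / 2 := by
      intro j _
      have := Complex.normSq_sub (z.1 j) (w.1 j)
      linarith
    rw [Finset.sum_congr rfl h1]
    rw [Finset.sum_div, ← Finset.sum_div, ← Finset.sum_div, Finset.sum_sub_distrib,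
      Finset.sum_add_distrib]
    simp [Complex.div_re]
    ring
  rw [key]
  have : 0 ≤ ∑ j, Complex.normSq (z.1 j - w.1 j) :=
    Finset.sum_nonneg fun j _ => Complex.normSq_nonneg _
  linarith

lemma rho_pos {z : (Fin m → ℂ) × ℂ} (hz : z ∈ Siegel m) : 0 < rho z := sub_pos.mpr hz

section Master

variable {F : Type*} [NormedAddCommGroup F] [InnerProductSpace ℂ F]

local notation "⟪" x ", " y "⟫" => @inner ℂ _ _ x y

lemma normsq_c (x : ℂ) : x * conj x = ((‖x‖ ^ 2 : ℝ) : ℂ) := by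
  rw [Complex.mul_conj, Complex.normSq_eq_norm_sq]

lemma inner_self_c (X : F) : ⟪X, X⟫ = ((‖X‖ ^ 2 : ℝ) : ℂ) := by
  rw [inner_self_eq_norm_sq_to_K]; norm_cast

lemma revCS (u₀ v₀ : ℂ) (U V : F) (q s : ℝ)
    (hq : u₀ * conj u₀ - ⟪U, U⟫ = (q : ℂ)) (hqpos : 0 < q)
    (hs : v₀ * conj v₀ - ⟪V, V⟫ = (s : ℂ)) (hspos : 0 < s) :
    q * s ≤ ‖u₀ * conj v₀ - ⟪V, U⟫‖ ^ 2 := by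
  have hqr : ‖u₀‖ ^ 2 - ‖U‖ ^ 2 = q := by
    rw [normsq_c, inner_self_c] at hq
    exact_mod_cast congrArg Complex.re hq
  have hsr : ‖v₀‖ ^ 2 - ‖V‖ ^ 2 = s := by
    rw [normsq_c, inner_self_c] at hs
    exact_mod_cast congrArg Complex.re hs
  have ht : ‖⟪V, U⟫‖ ≤ ‖V‖ * ‖U‖ := norm_inner_le_norm V U
  have hlow : ‖u₀‖ * ‖v₀‖ - ‖⟪V, U⟫‖ ≤ ‖u₀ * conj v₀ - ⟪V, U⟫‖ := by
    have := norm_sub_norm_le (u₀ * conj v₀) ⟪V, U⟫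
    have h2 : ‖u₀ * conj v₀‖ = ‖u₀‖ * ‖v₀‖ := by
      rw [norm_mul, RCLike.norm_conj]
    linarith
  have hX : (0:ℝ) ≤ ‖u₀ * conj v₀ - ⟪V, U⟫‖ := norm_nonneg _
  have hU0 : ‖U‖ < ‖u₀‖ := by nlinarith [norm_nonneg U, norm_nonneg u₀]
  have hV0 : ‖V‖ < ‖v₀‖ := by nlinarith [norm_nonneg V, norm_nonneg v₀]
  have h2 : 0 ≤ ‖u₀‖ * ‖v₀‖ - ‖U‖ * ‖V‖ := by nlinarith [norm_nonneg U, norm_nonneg V]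
  have h3 : ‖u₀‖ * ‖v₀‖ - ‖U‖ * ‖V‖ ≤ ‖u₀ * conj v₀ - ⟪V, U⟫‖ := by linarith
  have h4 : q * s ≤ (‖u₀‖ * ‖v₀‖ - ‖U‖ * ‖V‖) ^ 2 := by
    nlinarith [sq_nonneg (‖u₀‖ * ‖V‖ - ‖U‖ * ‖v₀‖)]
  nlinarith [pow_le_pow_left₀ h2 h3 2]

lemma quadCS (A B G : ℝ) (hA : 0 ≤ A) (hB : 0 ≤ B)
    (quad : ∀ t : ℝ, 0 ≤ A - 2 * (t * G) + t ^ 2 * G * B) : G ≤ A * B := by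
  by_cases hG0 : G ≤ 0
  · calc G ≤ 0 := hG0
      _ ≤ A * B := mul_nonneg hA hB
  · push_neg at hG0
    by_cases hB0 : B = 0
    · exfalso
      have hq1 := quad ((A + 1) / (2 * G))
      rw [hB0] at hq1
      have h2 : 2 * ((A + 1) / (2 * G) * G) = A + 1 := by
        field_simp
      nlinarith
    · have hBpos : 0 < B := lt_of_le_of_ne hB (Ne.symm hB0)
      have hq1 := quad (1 / B)
      have h2 : (1 / B) ^ 2 * G * B = G / B := by
        field_simp
      have h3 : 2 * (1 / B * G) = 2 * (G / B) := by ring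
      rw [h3, h2] at hq1
      have h4 : G / B ≤ A := by linarith
      calc G = G / B * B := by field_simp
        _ ≤ A * B := mul_le_mul_of_nonneg_right h4 hB

lemma normsub_c (x y : ℂ) : ‖x - y‖ ^ 2 = ‖x‖ ^ 2 - 2 * (x * conj y).re + ‖y‖ ^ 2 := by
  have := Complex.normSq_sub x y
  simp only [Complex.sq_norm]
  linarith

lemma master (z₀ u₀ v₀ : ℂ) (Z U V : F) (p q s : ℝ)
    (hpz : z₀ * conj z₀ - ⟪Z, Z⟫ = (p : ℂ)) (hp : 0 < p)
    (hq : u₀ * conj u₀ - ⟪U, U⟫ = (q : ℂ))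
    (hs : v₀ * conj v₀ - ⟪V, V⟫ = (s : ℂ)) :
    ‖(p : ℂ) * (u₀ * conj v₀ - ⟪V, U⟫)
        - conj (z₀ * conj u₀ - ⟪U, Z⟫) * (z₀ * conj v₀ - ⟪V, Z⟫)‖ ^ 2
      ≤ (‖z₀ * conj u₀ - ⟪U, Z⟫‖ ^ 2 - p * q) * (‖z₀ * conj v₀ - ⟪V, Z⟫‖ ^ 2 - p * s) := by
  set a : ℂ := z₀ * conj u₀ - ⟪U, Z⟫ with ha
  set b : ℂ := z₀ * conj v₀ - ⟪V, Z⟫ with hb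
  set c : ℂ := u₀ * conj v₀ - ⟪V, U⟫ with hc
  have ha' : conj a = conj z₀ * u₀ - ⟪Z, U⟫ := by
    rw [ha]; simp [map_sub, map_mul, inner_conj_symm]
  have hb' : conj b = conj z₀ * v₀ - ⟪Z, V⟫ := by
    rw [hb]; simp [map_sub, map_mul, inner_conj_symm]
  have hc' : conj c = conj u₀ * v₀ - ⟪U, V⟫ := by
    rw [hc]; simp [map_sub, map_mul, inner_conj_symm]
  -- real form of hpz
  have hzr : ‖z₀‖ ^ 2 - ‖Z‖ ^ 2 = p := by
    rw [normsq_c, inner_self_c] at hpz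
    exact_mod_cast congrArg Complex.re hpz
  -- the perpendicularity lemma
  have perp : ∀ (x₀ : ℂ) (X : F), x₀ * conj z₀ - ⟪Z, X⟫ = 0 → ‖x₀‖ ^ 2 ≤ ‖X‖ ^ 2 := by
    intro x₀ X hx
    have h1 : ‖x₀‖ * ‖z₀‖ = ‖⟪Z, X⟫‖ := by
      rw [← sub_eq_zero.mp hx, norm_mul, RCLike.norm_conj]
    have h2 : ‖⟪Z, X⟫‖ ≤ ‖Z‖ * ‖X‖ := norm_inner_le_norm Z X
    have hz0 : 0 < ‖z₀‖ := by nlinarith [norm_nonneg Z, norm_nonneg z₀]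
    have hZle : ‖Z‖ ≤ ‖z₀‖ := by nlinarith [norm_nonneg Z, norm_nonneg z₀]
    have h3 : ‖x₀‖ * ‖z₀‖ ≤ ‖z₀‖ * ‖X‖ := by nlinarith [norm_nonneg X]
    have h4 : ‖x₀‖ ≤ ‖X‖ := by
      by_contra hcon
      push_neg at hcon
      nlinarith [norm_nonneg X]
    exact pow_le_pow_left₀ (norm_nonneg x₀) h4 2
  -- projected vectors
  set uh : ℂ := (p : ℂ) * u₀ - conj a * z₀ with huh
  set Uh : F := (p : ℂ) • U - (conj a) • Z with hUh
  set vh : ℂ := (p : ℂ) * v₀ - conj b * z₀ with hvh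
  set Vh : F := (p : ℂ) • V - (conj b) • Z with hVh
  have hU : uh * conj z₀ - ⟪Z, Uh⟫ = 0 := by
    rw [huh, hUh]
    simp only [inner_sub_right, inner_smul_right]
    linear_combination (-(p : ℂ)) * ha' - conj a * hpz
  have hV : vh * conj z₀ - ⟪Z, Vh⟫ = 0 := by
    rw [hvh, hVh]
    simp only [inner_sub_right, inner_smul_right]
    linear_combination (-(p : ℂ)) * hb' - conj b * hpz
  set g : ℂ := conj uh * vh - ⟪Uh, Vh⟫ with hg
  have hAid : uh * conj uh - ⟪Uh, Uh⟫ = (p : ℂ) * ((p : ℂ) * (q : ℂ) - a * conj a) := by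
    rw [huh, hUh]
    simp only [inner_sub_left, inner_sub_right, inner_smul_left, inner_smul_right,
      map_sub, map_mul, Complex.conj_conj, Complex.conj_ofReal]
    linear_combination (p : ℂ) ^ 2 * hq + (p : ℂ) * a * ha' + (p : ℂ) * conj a * ha
      + a * conj a * hpz
  have hBid : vh * conj vh - ⟪Vh, Vh⟫ = (p : ℂ) * ((p : ℂ) * (s : ℂ) - b * conj b) := by
    rw [hvh, hVh]
    simp only [inner_sub_left, inner_sub_right, inner_smul_left, inner_smul_right,
      map_sub, map_mul, Complex.conj_conj, Complex.conj_ofReal]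
    linear_combination (p : ℂ) ^ 2 * hs + (p : ℂ) * b * hb' + (p : ℂ) * conj b * hb
      + b * conj b * hpz
  have hGid : g = (p : ℂ) * ((p : ℂ) * conj c - a * conj b) := by
    rw [hg, huh, hvh, hUh, hVh]
    simp only [inner_sub_left, inner_sub_right, inner_smul_left, inner_smul_right,
      map_sub, map_mul, Complex.conj_conj, Complex.conj_ofReal]
    linear_combination (-(p : ℂ) ^ 2) * hc' + (p : ℂ) * conj b * ha + (p : ℂ) * a * hb'
      + a * conj b * hpz
  have A1 : ‖Uh‖ ^ 2 - ‖uh‖ ^ 2 = p * (‖a‖ ^ 2 - p * q) := by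
    rw [normsq_c uh, inner_self_c Uh, normsq_c a] at hAid
    have h2 : ((‖uh‖ ^ 2 - ‖Uh‖ ^ 2 : ℝ) : ℂ) = ((p * (p * q - ‖a‖ ^ 2) : ℝ) : ℂ) := by
      push_cast at hAid ⊢
      linear_combination hAid
    have h3 := Complex.ofReal_inj.mp h2
    linarith
  have B1 : ‖Vh‖ ^ 2 - ‖vh‖ ^ 2 = p * (‖b‖ ^ 2 - p * s) := by
    rw [normsq_c vh, inner_self_c Vh, normsq_c b] at hBid
    have h2 : ((‖vh‖ ^ 2 - ‖Vh‖ ^ 2 : ℝ) : ℂ) = ((p * (p * s - ‖b‖ ^ 2) : ℝ) : ℂ) := by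
      push_cast at hBid ⊢
      linear_combination hBid
    have h3 := Complex.ofReal_inj.mp h2
    linarith
  have Gnorm : ‖g‖ = p * ‖(p : ℂ) * c - conj a * b‖ := by
    rw [hGid, norm_mul]
    have h1 : ‖(p : ℂ)‖ = p := by
      rw [Complex.norm_real, Real.norm_eq_abs]; exact abs_of_pos hp
    have h2 : (p : ℂ) * conj c - a * conj b = conj ((p : ℂ) * c - conj a * b) := by
      simp only [map_sub, map_mul, Complex.conj_conj, Complex.conj_ofReal]
    rw [h1, h2, RCLike.norm_conj]
  have quad : ∀ t : ℝ, 0 ≤ (‖Uh‖ ^ 2 - ‖uh‖ ^ 2) - 2 * (t * ‖g‖ ^ 2)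
      + t ^ 2 * ‖g‖ ^ 2 * (‖Vh‖ ^ 2 - ‖vh‖ ^ 2) := by
    intro t
    set lam : ℂ := -(t : ℂ) * conj g with hlam
    have hWperp : (uh - lam * vh) * conj z₀ - ⟪Z, Uh - lam • Vh⟫ = 0 := by
      simp only [inner_sub_right, inner_smul_right]
      linear_combination hU - lam * hV
    have hW := perp _ _ hWperp
    have hL : ‖uh - lam * vh‖ ^ 2 = ‖uh‖ ^ 2 - 2 * (uh * conj (lam * vh)).re
        + ‖lam‖ ^ 2 * ‖vh‖ ^ 2 := by
      rw [normsub_c, norm_mul]; ring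
    have hR : ‖Uh - lam • Vh‖ ^ 2 = ‖Uh‖ ^ 2 - 2 * (lam * ⟪Uh, Vh⟫).re
        + ‖lam‖ ^ 2 * ‖Vh‖ ^ 2 := by
      rw [norm_sub_sq (𝕜 := ℂ), inner_smul_right, norm_smul]
      simp only [RCLike.re_to_complex]
      ring
    have hc1 : (uh * conj (lam * vh)).re = (lam * (conj uh * vh)).re := by
      have h : uh * conj (lam * vh) = conj (lam * (conj uh * vh)) := by
        simp only [map_mul, Complex.conj_conj]
        ring
      rw [h, Complex.conj_re]
    have hc2 : (lam * (conj uh * vh)).re = (lam * g).re + (lam * ⟪Uh, Vh⟫).re := by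
      have h : lam * (conj uh * vh) = lam * g + lam * ⟪Uh, Vh⟫ := by
        rw [hg]; ring
      rw [h, Complex.add_re]
    have hc3 : (lam * g).re = -(t * ‖g‖ ^ 2) := by
      have h : lam * g = ((-(t * ‖g‖ ^ 2) : ℝ) : ℂ) := by
        have hgg : conj g * g = ((‖g‖ ^ 2 : ℝ) : ℂ) := by
          rw [mul_comm]; exact normsq_c g
        rw [hlam]
        push_cast at hgg ⊢
        linear_combination (-(t : ℂ)) * hgg
      rw [h, Complex.ofReal_re]
    have hlamnorm : ‖lam‖ ^ 2 = t ^ 2 * ‖g‖ ^ 2 := by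
      rw [hlam, norm_mul, norm_neg, RCLike.norm_conj, mul_pow]
      rw [Complex.norm_real, Real.norm_eq_abs, _root_.sq_abs]
    rw [hL, hR, hlamnorm] at hW
    rw [hc1, hc2, hc3] at hW
    linarith
  have hB1' : 0 ≤ ‖Vh‖ ^ 2 - ‖vh‖ ^ 2 := by
    have := perp vh Vh hV
    linarith
  have hA1' : 0 ≤ ‖Uh‖ ^ 2 - ‖uh‖ ^ 2 := by
    have := perp uh Uh hU
    linarith
  have hCS : ‖g‖ ^ 2 ≤ (‖Uh‖ ^ 2 - ‖uh‖ ^ 2) * (‖Vh‖ ^ 2 - ‖vh‖ ^ 2) :=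
    quadCS _ _ _ hA1' hB1' quad
  rw [A1, B1] at hCS
  have hX2 : ‖g‖ ^ 2 = p ^ 2 * ‖(p : ℂ) * c - conj a * b‖ ^ 2 := by
    rw [Gnorm]; ring
  rw [hX2] at hCS
  have hre : p * (‖a‖ ^ 2 - p * q) * (p * (‖b‖ ^ 2 - p * s))
      = p ^ 2 * ((‖a‖ ^ 2 - p * q) * (‖b‖ ^ 2 - p * s)) := by ring
  rw [hre] at hCS
  have hp2 : (0:ℝ) < p ^ 2 := by positivity
  exact le_of_mul_le_mul_left hCS hp2

end Master

set_option maxHeartbeats 1000000 in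
lemma key_ineq (T A B C q s : ℝ) (hT0 : 0 < T) (hT1 : T < 1) (hq : 0 < q) (hs : 0 < s)
    (hA : 0 < A) (hB : 0 < B) (h2 : s * A ^ 2 + q * B ^ 2 ≤ 2 * C * A * B)
    (h3 : (q + s) / 2 ≤ C) (h4 : C ^ 2 * (1 - T ^ 2) ≤ q * s) :
    A * (1 - T) ≤ B * (1 + T) := by
  have hCpos : 0 < C := by linarith
  have hqs : (q + s) ^ 2 ≤ 4 * C ^ 2 := by nlinarith
  have hTT : 0 ≤ 1 - T ^ 2 := by nlinarith
  have h5 : (q + s) ^ 2 * (1 - T ^ 2) ≤ 4 * (q * s) := by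
    linarith [mul_le_mul_of_nonneg_right hqs hTT]
  have h6 : (q - s) ^ 2 ≤ T ^ 2 * (q + s) ^ 2 := by linarith [h5]
  have h7 : q * (1 - T) ≤ s * (1 + T) := by
    by_contra hcon
    push_neg at hcon
    have e : 0 < q - s - T * (q + s) := by linarith
    have e2 : 0 < q - s + T * (q + s) := by
      nlinarith [mul_pos hT0 (show (0:ℝ) < q + s by linarith)]
    linarith [mul_pos e e2]
  have h8 : C * (1 - T) ≤ s := by
    have e1 : C ^ 2 * (1 - T) ^ 2 * (1 + T) ≤ s ^ 2 * (1 + T) := by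
      linarith [mul_le_mul_of_nonneg_right h4 (show (0:ℝ) ≤ 1 - T by linarith),
        mul_le_mul_of_nonneg_left h7 hs.le]
    have e2 : (C * (1 - T)) ^ 2 ≤ s ^ 2 := by
      have h1T : (0:ℝ) < 1 + T := by linarith
      nlinarith [e1]
    nlinarith [e2, sq_nonneg (C * (1 - T) - s), sq_nonneg (C * (1 - T) + s)]
  have h9 : s * A ≤ C * (1 + T) * B := by
    by_contra hcon
    push_neg at hcon
    have e1 : C * T * B < s * A - C * B := by linarith
    have hCT : 0 ≤ C * T * B := by positivity
    have h4' : C ^ 2 - q * s ≤ C ^ 2 * T ^ 2 := by linarith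
    have esq : (C * T * B) ^ 2 < (s * A - C * B) ^ 2 := by
      have h := mul_self_lt_mul_self hCT e1
      linarith [h]
    have e3 : (C ^ 2 - q * s) * B ^ 2 ≤ (C * T * B) ^ 2 := by
      linarith [mul_le_mul_of_nonneg_right h4' (sq_nonneg B)]
    have e2 : (C ^ 2 - q * s) * B ^ 2 < (s * A - C * B) ^ 2 := lt_of_le_of_lt e3 esq
    have hfin : 0 < s * (s * A ^ 2 - 2 * C * A * B + q * B ^ 2) := by linarith [e2]
    have hfin2 : s * (s * A ^ 2 - 2 * C * A * B + q * B ^ 2) ≤ 0 := by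
      linarith [mul_le_mul_of_nonneg_left h2 hs.le]
    linarith
  nlinarith [mul_le_mul_of_nonneg_right h9 (show (0:ℝ) ≤ 1 - T by linarith),
    mul_le_mul_of_nonneg_right h8 (by positivity : (0:ℝ) ≤ (1 + T) * B)]

lemma tanh_exp (r : ℝ) :
    Real.tanh r = (Real.exp (2 * r) - 1) / (Real.exp (2 * r) + 1) := by
  rw [Real.tanh_eq_sinh_div_cosh, Real.sinh_eq, Real.cosh_eq, Real.exp_neg, two_mul,
    Real.exp_add]
  have h : 0 < Real.exp r := Real.exp_pos r
  field_simp

lemma tanh_pos' (r : ℝ) (hr : 0 < r) : 0 < Real.tanh r := by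
  rw [tanh_exp]
  have h1 : 1 < Real.exp (2 * r) := by
    rw [← Real.exp_zero]
    exact Real.exp_lt_exp.mpr (by linarith)
  have h2 : 0 < Real.exp (2 * r) + 1 := by linarith
  exact div_pos (by linarith) h2

lemma tanh_lt_one' (r : ℝ) : Real.tanh r < 1 := by
  rw [tanh_exp]
  have h : 0 < Real.exp (2 * r) := Real.exp_pos _
  rw [div_lt_one (by linarith)]
  linarith

lemma le_tanh_of_artanh_le (d r : ℝ) (hd0 : 0 ≤ d) (hd1 : d < 1) (h : artanhR d ≤ r) :
    d ≤ Real.tanh r := by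
  have h1 : Real.log ((1 + d) / (1 - d)) ≤ 2 * r := by
    unfold artanhR at h
    linarith
  have hpos : 0 < (1 + d) / (1 - d) := by
    apply div_pos <;> linarith
  have h2 : (1 + d) / (1 - d) ≤ Real.exp (2 * r) := by
    rw [← Real.exp_log hpos]
    exact Real.exp_le_exp.mpr h1
  have h3 : 1 + d ≤ Real.exp (2 * r) * (1 - d) := by
    rw [div_le_iff₀ (by linarith)] at h2
    linarith
  rw [tanh_exp]
  rw [le_div_iff₀ (by positivity)]
  nlinarith [Real.exp_pos (2 * r)]

end RhoAux

set_option maxHeartbeats 2000000 in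
open RhoAux in
theorem rhoC_ratio_bounds (m : ℕ) (r : ℝ) (hr : 0 < r)
    (z u v : (Fin m → ℂ) × ℂ) (hz : z ∈ Siegel m) (hu : u ∈ Siegel m) (hv : v ∈ Siegel m)
    (huv : bDist u v ≤ r) :
    (1 - Real.tanh r) / (1 + Real.tanh r) ≤ ‖rhoC z u‖ / ‖rhoC z v‖ ∧
    ‖rhoC z u‖ / ‖rhoC z v‖ ≤ (1 + Real.tanh r) / (1 - Real.tanh r) := by
  have hp : 0 < rho z := rho_pos hz
  have hq : 0 < rho u := rho_pos hu
  have hs : 0 < rho v := rho_pos hv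
  set T : ℝ := Real.tanh r with hT
  have hT0 : 0 < T := tanh_pos' r hr
  have hT1 : T < 1 := tanh_lt_one' r
  -- abbreviations
  set A : ℝ := ‖rhoC z u‖ with hA
  set B : ℝ := ‖rhoC z v‖ with hB
  set C : ℝ := ‖rhoC u v‖ with hC
  have habs : ∀ (x y : (Fin m → ℂ) × ℂ), (rho x + rho y) / 2 ≤ ‖rhoC x y‖ :=
    fun x y => le_trans (re_rhoC x y) (Complex.re_le_norm _)
  have hApos : 0 < A := lt_of_lt_of_le (by linarith [habs z u] : (0:ℝ) < (rho z + rho u) / 2)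
    (habs z u)
  have hBpos : 0 < B := lt_of_lt_of_le (by linarith : (0:ℝ) < (rho z + rho v) / 2) (habs z v)
  have hCpos : 0 < C := lt_of_lt_of_le (by linarith : (0:ℝ) < (rho u + rho v) / 2) (habs u v)
  -- hypotheses for the inner-product-space lemmas
  have hself : ∀ x : (Fin m → ℂ) × ℂ,
      fz x * starRingEnd ℂ (fz x) - (inner ℂ (Fz x) (Fz x) : ℂ) = ((rho x : ℝ) : ℂ) := by
    intro x
    rw [← rhoC_repr]
    exact rhoC_self x
  -- reverse Cauchy-Schwarz : q * s ≤ C ^ 2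
  have hG1 : rho u * rho v ≤ C ^ 2 := by
    have h := revCS (fz u) (fz v) (Fz u) (Fz v) (rho u) (rho v) (hself u) hq (hself v) hs
    rw [← rhoC_repr u v] at h
    exact h
  -- the master inequality
  have hmaster := master (fz z) (fz u) (fz v) (Fz z) (Fz u) (Fz v) (rho z) (rho u) (rho v)
    (hself z) hp (hself u) (hself v)
  rw [← rhoC_repr u v, ← rhoC_repr z u, ← rhoC_repr z v] at hmaster
  -- lower bound for the norm on the left
  have hXlow : (rho z * C - A * B) ^ 2
      ≤ ‖((rho z : ℝ) : ℂ) * rhoC u v - starRingEnd ℂ (rhoC z u) * rhoC z v‖ ^ 2 := by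
    have h1 := abs_norm_sub_norm_le (((rho z : ℝ) : ℂ) * rhoC u v)
      (starRingEnd ℂ (rhoC z u) * rhoC z v)
    have h2 : ‖((rho z : ℝ) : ℂ) * rhoC u v‖ = rho z * C := by
      rw [norm_mul, Complex.norm_real, Real.norm_eq_abs,
        abs_of_pos hp, hC]
    have h3 : ‖starRingEnd ℂ (rhoC z u) * rhoC z v‖ = A * B := by
      rw [norm_mul, RCLike.norm_conj, hA, hB]
    rw [h2, h3] at h1
    have h4 : |rho z * C - A * B| ≤ ‖((rho z : ℝ) : ℂ) * rhoC u v
        - starRingEnd ℂ (rhoC z u) * rhoC z v‖ := h1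
    nlinarith [abs_nonneg (rho z * C - A * B), le_abs_self (rho z * C - A * B),
      neg_abs_le (rho z * C - A * B)]
  have hmaster' : (rho z * C - A * B) ^ 2
      ≤ (A ^ 2 - rho z * rho u) * (B ^ 2 - rho z * rho v) := by
    have hnormA : ‖rhoC z u‖ = A := by rw [hA]
    have hnormB : ‖rhoC z v‖ = B := by rw [hB]
    rw [hnormA, hnormB] at hmaster
    exact le_trans hXlow hmaster
  -- the three-point inequality
  have h2 : rho v * A ^ 2 + rho u * B ^ 2 ≤ 2 * C * A * B := by
    nlinarith [hmaster', hG1, hp, mul_pos hp hp]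
  -- C is at least the average
  have h3 : (rho u + rho v) / 2 ≤ C := habs u v
  -- from the Bergman distance hypothesis
  set d : ℝ := Real.sqrt (1 - rho u * rho v / C ^ 2) with hd
  have harg : 0 ≤ 1 - rho u * rho v / C ^ 2 := by
    rw [sub_nonneg, div_le_one (by positivity)]
    exact hG1
  have hd0 : 0 ≤ d := Real.sqrt_nonneg _
  have hdsq : d ^ 2 = 1 - rho u * rho v / C ^ 2 := Real.sq_sqrt harg
  have hd1 : d < 1 := by
    have hpos : 0 < rho u * rho v / C ^ 2 := by positivity
    nlinarith [hdsq, hd0]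
  have hduv : bDist u v = artanhR d := by
    rw [bDist, hd, hC]
  have hdT : d ≤ T := le_tanh_of_artanh_le d r hd0 hd1 (by rw [← hduv]; exact huv)
  have h4 : C ^ 2 * (1 - T ^ 2) ≤ rho u * rho v := by
    have hdT2 : d ^ 2 ≤ T ^ 2 := by nlinarith
    have hfs : (1 - rho u * rho v / C ^ 2) * C ^ 2 = C ^ 2 - rho u * rho v := by
      field_simp
    nlinarith [hdsq, sq_nonneg C]
  -- apply the key inequality in both directions
  have key1 := key_ineq T A B C (rho u) (rho v) hT0 hT1 hq hs hApos hBpos h2 h3 h4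
  have key2 := key_ineq T B A C (rho v) (rho u) hT0 hT1 hs hq hBpos hApos
    (by linarith) (by linarith) (by linarith [h4])
  constructor
  · rw [div_le_div_iff₀ (by linarith : (0:ℝ) < 1 + T) hBpos]
    linarith
  · rw [div_le_div_iff₀ hBpos (by linarith : (0:ℝ) < 1 - T)]
    linarith
end
end

section
/- For any z ∈ U and r > 0, the Lebesgue volume of the Bergman metric ball D(z,r) = {w ∈ U : β(z,w) < r} equals (4πⁿ/n!) · tanh^{2n}(r)/(1 − tanh²r)^{n+1} · ρ(z)^{n+1}. -/
open Complex MeasureTheory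

noncomputable section

open Set
open scoped ENNReal NNReal

lemma tanh_pos_lt_one {r : ℝ} (hr : 0 < r) : 0 < Real.tanh r ∧ Real.tanh r < 1 := by
  have hc := Real.cosh_pos r
  have hs : 0 < Real.sinh r := Real.sinh_pos_iff.2 hr
  constructor
  · rw [Real.tanh_eq_sinh_div_cosh]; positivity
  · rw [Real.tanh_eq_sinh_div_cosh, div_lt_one hc]
    nlinarith [Real.cosh_sub_sinh r, Real.exp_pos (-r)]

lemma artanhR_tanh (r : ℝ) : artanhR (Real.tanh r) = r := by
  have hc := Real.cosh_pos r
  have h1 : (1 + Real.tanh r) / (1 - Real.tanh r) = Real.exp (2 * r) := by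
    rw [Real.tanh_eq_sinh_div_cosh]
    have hne : 1 - Real.sinh r / Real.cosh r ≠ 0 := by
      have : Real.sinh r / Real.cosh r < 1 := by
        rw [div_lt_one hc]; nlinarith [Real.cosh_sub_sinh r, Real.exp_pos (-r)]
      intro h; linarith
    rw [div_eq_iff hne]
    have e1 := Real.cosh_add_sinh r
    have e2 := Real.cosh_sub_sinh r
    have : Real.exp (2 * r) * Real.exp (-r) = Real.exp r := by
      rw [← Real.exp_add]; ring_nf
    field_simp
    rw [e1, e2]; linarith [this]
  rw [artanhR, h1, Real.log_exp]; ring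

lemma artanhR_lt_artanhR {x y : ℝ} (hx : 0 ≤ x) (hxy : x < y) (hy : y < 1) :
    artanhR x < artanhR y := by
  have h1 : (0:ℝ) < (1 + x) / (1 - x) := by
    apply div_pos <;> nlinarith
  have h2 : (1 + x) / (1 - x) < (1 + y) / (1 - y) := by
    rw [div_lt_div_iff₀ (by nlinarith) (by nlinarith)]
    nlinarith
  have := Real.log_lt_log h1 h2
  unfold artanhR; linarith

lemma artanhR_lt_iff {s r : ℝ} (hs0 : 0 ≤ s) (hs1 : s < 1) (hr : 0 < r) :
    artanhR (Real.sqrt s) < r ↔ s < Real.tanh r ^ 2 := by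
  obtain ⟨ht0, ht1⟩ := tanh_pos_lt_one hr
  have hsq0 : 0 ≤ Real.sqrt s := Real.sqrt_nonneg s
  have hsq1 : Real.sqrt s < 1 := by
    rw [show (1:ℝ) = Real.sqrt 1 by simp]
    exact Real.sqrt_lt_sqrt hs0 hs1
  constructor
  · intro h
    by_contra hc
    push_neg at hc
    have : Real.tanh r ≤ Real.sqrt s := by
      rw [show Real.tanh r = Real.sqrt (Real.tanh r ^ 2) by
        rw [Real.sqrt_sq ht0.le]]
      exact Real.sqrt_le_sqrt hc
    rcases eq_or_lt_of_le this with h' | h'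
    · rw [← h', artanhR_tanh] at h; exact absurd h (lt_irrefl r)
    · have := artanhR_lt_artanhR ht0.le h' hsq1
      rw [artanhR_tanh] at this; linarith
  · intro h
    have : Real.sqrt s < Real.tanh r := by
      rw [show Real.tanh r = Real.sqrt (Real.tanh r ^ 2) by rw [Real.sqrt_sq ht0.le]]
      exact Real.sqrt_lt_sqrt hs0 h
    have := artanhR_lt_artanhR hsq0 this ht1
    rwa [artanhR_tanh] at this

lemma oneD (n : ℕ) {A : ℝ} (hA : 0 < A) :
    ∫ s in Ioi (0:ℝ), s * max (A - s ^ 2) 0 ^ (n + 1) = A ^ (n + 2) / (2 * (n + 2)) := by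
  set R := Real.sqrt A with hR
  have hR0 : 0 < R := Real.sqrt_pos.2 hA
  have hR2 : R ^ 2 = A := Real.sq_sqrt hA.le
  have hF : Continuous fun s : ℝ => s * max (A - s ^ 2) 0 ^ (n + 1) := by
    exact continuous_id.mul (((continuous_const.sub (continuous_pow 2)).max
      continuous_const).pow _)
  have hsupp : HasCompactSupport fun s : ℝ => s * max (A - s ^ 2) 0 ^ (n + 1) := by
    apply HasCompactSupport.intro (isCompact_closedBall (0:ℝ) R)
    intro x hx
    simp only [Metric.mem_closedBall, Real.dist_eq, sub_zero, not_le] at hx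
    have : A - x ^ 2 < 0 := by
      have : R ^ 2 < x ^ 2 := by
        rw [← _root_.sq_abs x]; exact pow_lt_pow_left₀ hx hR0.le (by norm_num)
      linarith [hR2 ▸ this]
    rw [max_eq_right this.le, zero_pow (by omega), mul_zero]
  have hint : Integrable fun s : ℝ => s * max (A - s ^ 2) 0 ^ (n + 1) :=
    hF.integrable_of_hasCompactSupport hsupp
  have hunion : Ioc (0:ℝ) R ∪ Ioi R = Ioi 0 := Ioc_union_Ioi_eq_Ioi hR0.le
  rw [← hunion, setIntegral_union (Ioc_disjoint_Ioi le_rfl) measurableSet_Ioi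
    hint.integrableOn hint.integrableOn]
  have h2 : ∫ s in Ioi R, s * max (A - s ^ 2) 0 ^ (n + 1) = 0 := by
    rw [setIntegral_congr_fun measurableSet_Ioi (g := fun _ => (0:ℝ))]
    · simp
    · intro x hx
      have hx' : R < x := hx
      have : A - x ^ 2 < 0 := by
        have : R ^ 2 < x ^ 2 := by
          apply pow_lt_pow_left₀ hx' hR0.le (by norm_num)
        linarith [hR2 ▸ this]
      simp [max_eq_right this.le, zero_pow (show n + 1 ≠ 0 by omega)]
  rw [h2, add_zero]
  have h1 : ∫ s in Ioc (0:ℝ) R, s * max (A - s ^ 2) 0 ^ (n + 1)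
      = ∫ s in Ioc (0:ℝ) R, s * (A - s ^ 2) ^ (n + 1) := by
    apply setIntegral_congr_fun measurableSet_Ioc
    intro x hx
    have hxA : x ^ 2 ≤ A := by
      rw [← hR2]
      exact pow_le_pow_left₀ (le_of_lt hx.1) hx.2 2
    dsimp only
    rw [max_eq_left (by linarith)]
  rw [h1, ← intervalIntegral.integral_of_le hR0.le]
  have hd : ∀ x ∈ Set.uIcc (0:ℝ) R, HasDerivAt
      (fun s : ℝ => -(A - s ^ 2) ^ (n + 2) / (2 * ((n : ℝ) + 2)))
      (x * (A - x ^ 2) ^ (n + 1)) x := by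
    intro x _
    have d1 : HasDerivAt (fun s : ℝ => A - s ^ 2) (-(2 * x)) x := by
      simpa using (hasDerivAt_pow 2 x).const_sub A
    have d2 : HasDerivAt (fun s : ℝ => (A - s ^ 2) ^ (n + 2))
        ((n + 2 : ℕ) * (A - x ^ 2) ^ (n + 1) * (-(2 * x))) x := d1.pow (n + 2)
    have d3 := (d2.div_const (2 * ((n : ℝ) + 2))).neg
    have hne : (2 : ℝ) * ((n : ℝ) + 2) ≠ 0 := by positivity
    have e : (fun s : ℝ => -(A - s ^ 2) ^ (n + 2) / (2 * ((n : ℝ) + 2)))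
        = -fun s : ℝ => (A - s ^ 2) ^ (n + 2) / (2 * ((n : ℝ) + 2)) := by
      funext s; simp only [Pi.neg_apply]; ring
    rw [e]
    refine d3.congr_deriv ?_
    push_cast
    rw [mul_neg, neg_div, neg_neg, div_eq_iff hne]
    ring
  have hii : IntervalIntegrable (fun s : ℝ => s * (A - s ^ 2) ^ (n + 1)) volume 0 R :=
    (continuous_id.mul ((continuous_const.sub (continuous_pow 2)).pow _)).intervalIntegrable 0 R
  have key := intervalIntegral.integral_eq_sub_of_hasDerivAt hd hii
  rw [key, hR2]
  norm_num
  ring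

lemma lintegral_c (n : ℕ) (A : ℝ) :
    ∫⁻ z : ℂ, ENNReal.ofReal (max (A - ‖z‖ ^ 2) 0 ^ (n + 1)) =
      ENNReal.ofReal (Real.pi * max A 0 ^ (n + 2) / (n + 2)) := by
  rcases le_or_gt A 0 with hA | hA
  · have h0 : ∀ z : ℂ, max (A - ‖z‖ ^ 2) 0 ^ (n + 1) = 0 := by
      intro z
      rw [max_eq_right (by nlinarith [sq_nonneg (‖z‖)]), zero_pow (by omega)]
    simp only [h0, ENNReal.ofReal_zero, lintegral_zero]
    rw [max_eq_right hA, zero_pow (by omega)]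
    simp
  · -- A > 0
    set g : ℂ → ℝ := fun z => max (A - ‖z‖ ^ 2) 0 ^ (n + 1) with hg
    have hgc : Continuous g :=
      ((continuous_const.sub (continuous_norm.pow 2)).max continuous_const).pow _
    have hgnn : ∀ z, 0 ≤ g z := fun z => pow_nonneg (le_max_right _ _) _
    have hsupp : HasCompactSupport g := by
      apply HasCompactSupport.intro (isCompact_closedBall (0:ℂ) (Real.sqrt A))
      intro z hz
      simp only [Metric.mem_closedBall, dist_zero_right, not_le] at hz
      have : A < ‖z‖ ^ 2 := by
        have h1 : Real.sqrt A ^ 2 < ‖z‖ ^ 2 :=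
          pow_lt_pow_left₀ hz (Real.sqrt_nonneg A) (by norm_num)
        rwa [Real.sq_sqrt hA.le] at h1
      simp [hg, max_eq_right (by linarith : A - ‖z‖ ^ 2 ≤ 0),
        zero_pow (show n + 1 ≠ 0 by omega)]
    have hint : Integrable g := hgc.integrable_of_hasCompactSupport hsupp
    rw [← MeasureTheory.ofReal_integral_eq_lintegral_ofReal hint
      (Filter.Eventually.of_forall hgnn)]
    congr 1
    rw [← Complex.integral_comp_polarCoord_symm g]
    have heq : ∀ p : ℝ × ℝ, p.1 • g (Complex.polarCoord.symm p)
        = (p.1 * max (A - p.1 ^ 2) 0 ^ (n + 1)) * (1 : ℝ) := by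
      intro p
      rw [smul_eq_mul, hg]
      simp only [Complex.norm_polarCoord_symm, _root_.sq_abs, mul_one]
    calc ∫ p in polarCoord.target, p.1 • g (Complex.polarCoord.symm p)
        = ∫ p in Ioi (0:ℝ) ×ˢ Ioo (-Real.pi) Real.pi,
            (fun s => s * max (A - s ^ 2) 0 ^ (n + 1)) p.1 * (fun _ => (1:ℝ)) p.2 := by
          rw [polarCoord_target]
          exact setIntegral_congr_fun (measurableSet_Ioi.prod measurableSet_Ioo)
            (fun p _ => heq p)
      _ = (∫ s in Ioi (0:ℝ), s * max (A - s ^ 2) 0 ^ (n + 1)) *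
            (∫ _ in Ioo (-Real.pi) Real.pi, (1:ℝ)) := by
          rw [← setIntegral_prod_mul]
          rfl
      _ = Real.pi * max A 0 ^ (n + 2) / (n + 2) := by
          rw [oneD n hA]
          rw [setIntegral_const, smul_eq_mul, mul_one, Real.volume_real_Ioo_of_le (by linarith [Real.pi_pos]), max_eq_left hA.le]
          have : (n:ℝ) + 2 ≠ 0 := by positivity
          field_simp
          ring

lemma lintegral_pi_max (m k : ℕ) (A : ℝ) :
    ∫⁻ v : Fin m → ℂ, ENNReal.ofReal (max (A - ∑ j, ‖v j‖ ^ 2) 0 ^ (k + 1)) =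
      ENNReal.ofReal (Real.pi ^ m * ((k + 1).factorial : ℝ) / ((m + k + 1).factorial : ℝ) *
        max A 0 ^ (m + k + 1)) := by
  induction m generalizing A with
  | zero =>
      simp only [Finset.univ_eq_empty, Finset.sum_empty, sub_zero]
      rw [lintegral_const]
      have : (volume : Measure (Fin 0 → ℂ)) Set.univ = 1 := by
        rw [MeasureTheory.volume_pi, Measure.pi_of_empty]
        simp
      rw [this, mul_one]
      norm_num
      rw [div_self (by positivity : ((k+1).factorial : ℝ) ≠ 0), one_mul]
      rw [ENNReal.ofReal_pow (le_max_right _ _)]; congr 1; simp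
  | succ m ih =>
      -- transfer to ℂ × (Fin m → ℂ)
      have hmp := (measurePreserving_piFinSuccAbove (fun _ : Fin (m+1) => (volume : Measure ℂ)) 0).symm
      rw [MeasureTheory.volume_pi, ← hmp.lintegral_comp]
      · rw [show ((volume : Measure ℂ).prod (Measure.pi fun _ : Fin m => volume))
            = ((volume : Measure ℂ).prod (volume : Measure (Fin m → ℂ))) by
            rw [MeasureTheory.volume_pi]]
        have hsum : ∀ p : ℂ × (Fin m → ℂ),
            (∑ j, ‖((MeasurableEquiv.piFinSuccAbove (fun _ : Fin (m+1) => ℂ) 0).symm p) j‖ ^ 2)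
              = ‖p.1‖ ^ 2 + ∑ j, ‖p.2 j‖ ^ 2 := by
          intro p
          rw [Fin.sum_univ_succ]
          simp [MeasurableEquiv.piFinSuccAbove_symm_apply]
        simp_rw [hsum]
        rw [lintegral_prod]
        · have inner : ∀ z : ℂ,
              (∫⁻ v : Fin m → ℂ, ENNReal.ofReal
                (max (A - (‖z‖ ^ 2 + ∑ j, ‖v j‖ ^ 2)) 0 ^ (k + 1)))
              = ENNReal.ofReal (Real.pi ^ m * ((k + 1).factorial : ℝ) / ((m + k + 1).factorial : ℝ) *
                  max (A - ‖z‖ ^ 2) 0 ^ (m + k + 1)) := by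
            intro z
            have := ih (A - ‖z‖ ^ 2)
            simp_rw [sub_sub] at this ⊢
            exact this
          simp_rw [inner]
          have hc : (0:ℝ) ≤ Real.pi ^ m * ((k + 1).factorial : ℝ) / ((m + k + 1).factorial : ℝ) := by
            positivity
          simp_rw [ENNReal.ofReal_mul hc]
          rw [lintegral_const_mul]
          · rw [lintegral_c (m + k) A]
            rw [← ENNReal.ofReal_mul hc]
            congr 1
            have h1 : ((m + k + 1 : ℕ) : ℝ) + 2 = ((m + 1 + k + 1 : ℕ) : ℝ) + 1 := by push_cast; ring
            have hfac : ((m + 1 + k + 1).factorial : ℝ) = ((m + k + 1).factorial : ℝ) * ((m + k + 2 : ℕ) : ℝ) := by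
              have : m + 1 + k + 1 = (m + k + 1) + 1 := by omega
              rw [this, Nat.factorial_succ]
              push_cast; ring
            rw [hfac]
            have h2 : ((m + k + 1).factorial : ℝ) ≠ 0 := by positivity
            have h3 : ((m + k + 2 : ℕ) : ℝ) ≠ 0 := by positivity
            have h4 : (↑(m+k) : ℝ) + 2 = ((m + k + 2 : ℕ) : ℝ) := by push_cast; ring
            rw [show m + k + 1 + 1 = m + k + 2 by omega] at *
            rw [show m + 1 + k + 1 = m + k + 2 by omega]
            field_simp [h4]
            push_cast; ring
          · exact ((continuous_const.sub (continuous_norm.pow 2)).max continuous_const |>.pow _).measurable.ennreal_ofReal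
        · apply Measurable.aemeasurable
          apply Measurable.ennreal_ofReal
          apply Measurable.pow _ measurable_const
          apply Measurable.max _ measurable_const
          apply Measurable.const_sub
          apply Measurable.add
          · exact (continuous_norm.comp continuous_fst).measurable.pow measurable_const
          · apply Finset.measurable_sum
            intro j _
            exact ((continuous_norm.comp ((continuous_apply j).comp continuous_snd)).measurable).pow measurable_const
      · exact (Measurable.ennreal_ofReal (by
          apply Measurable.pow _ measurable_const
          apply Measurable.max _ measurable_const
          apply Measurable.const_sub
          apply Finset.measurable_sum
          intro j _
          exact ((continuous_norm.comp (continuous_apply j)).measurable).pow measurable_const))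

lemma rhoC_re {m : ℕ} (z w : (Fin m → ℂ) × ℂ) :
    (rhoC z w).re = (w.2.im + z.2.im) / 2 - (∑ j, z.1 j * starRingEnd ℂ (w.1 j)).re := by
  simp [rhoC, Complex.div_re, Complex.mul_re, Complex.normSq_apply]
  ring

lemma rhoC_im {m : ℕ} (z w : (Fin m → ℂ) × ℂ) :
    (rhoC z w).im = (w.2.re - z.2.re) / 2 - (∑ j, z.1 j * starRingEnd ℂ (w.1 j)).im := by
  simp [rhoC, Complex.div_im, Complex.mul_im, Complex.normSq_apply]
  ring

lemma sum_abs_sub_sq {m : ℕ} (u v : Fin m → ℂ) :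
    ∑ j, ‖u j - v j‖ ^ 2 =
      (∑ j, ‖u j‖ ^ 2) + (∑ j, ‖v j‖ ^ 2)
        - 2 * (∑ j, v j * starRingEnd ℂ (u j)).re := by
  rw [Complex.re_sum, Finset.mul_sum, ← Finset.sum_add_distrib, ← Finset.sum_sub_distrib]
  apply Finset.sum_congr rfl
  intro j _
  rw [Complex.sq_norm, Complex.sq_norm, Complex.sq_norm]
  simp [Complex.normSq_apply, Complex.mul_re]
  ring

lemma re_rhoC_eq {m : ℕ} (z w : (Fin m → ℂ) × ℂ) :
    (rhoC z w).re = (rho z + rho w + ∑ j, ‖w.1 j - z.1 j‖ ^ 2) / 2 := by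
  rw [rhoC_re, sum_abs_sub_sq, rho, rho]
  ring

lemma fund_ineq {m : ℕ} (z w : (Fin m → ℂ) × ℂ) (hz : 0 < rho z) (hw : 0 < rho w) :
    rho z * rho w ≤ ‖rhoC z w‖ ^ 2 ∧ 0 < ‖rhoC z w‖ ^ 2 := by
  have hre : (rho z + rho w) / 2 ≤ (rhoC z w).re := by
    rw [re_rhoC_eq]
    have : 0 ≤ ∑ j, ‖w.1 j - z.1 j‖ ^ 2 :=
      Finset.sum_nonneg fun j _ => sq_nonneg _
    linarith
  have habs : (rhoC z w).re ^ 2 ≤ ‖rhoC z w‖ ^ 2 := by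
    rw [Complex.sq_norm, Complex.normSq_apply]
    nlinarith [sq_nonneg (rhoC z w).im]
  constructor
  · nlinarith [sq_nonneg (rho z - rho w)]
  · nlinarith [sq_nonneg (rho z - rho w)]

lemma star_id (x y a b p q B Q K : ℝ) (hK : K ≠ 0) :
    (b - Q) * (y - B) - K * (((y + b) / 2 - p) ^ 2 + ((x - a) / 2 - q) ^ 2)
    = K / 4 * ((4 * (b - Q) / K) * ((1 - K) * (b - Q) / K - (B + Q - 2 * p))
        - ((x - (a + 2 * q)) ^ 2 + (y - (2 * p - b + 2 * (b - Q) / K)) ^ 2)) := by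
  field_simp
  ring

set_option maxHeartbeats 1000000 in
lemma slice_eq {m : ℕ} (z : (Fin m → ℂ) × ℂ) {K : ℝ} (hK : 0 < K) (w₁ : Fin m → ℂ)
    (P ctr : ℂ) (R2 : ℝ)
    (hP : P = ∑ j, z.1 j * starRingEnd ℂ (w₁ j))
    (hctr : ctr = starRingEnd ℂ z.2 + 2 * Complex.I * (starRingEnd ℂ P)
      + ((2 * rho z / K : ℝ) : ℂ) * Complex.I)
    (hR2 : R2 = (4 * rho z / K) *
      ((1 - K) * rho z / K - ∑ j, ‖w₁ j - z.1 j‖ ^ 2)) :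
    {wn : ℂ | K * ‖rhoC z (w₁, wn)‖ ^ 2 < rho z * rho (w₁, wn)}
      = Metric.ball ctr (Real.sqrt (max R2 0)) := by
  ext wn
  have e1 : ‖rhoC z (w₁, wn)‖ ^ 2
      = ((wn.im + z.2.im) / 2 - P.re) ^ 2 + ((wn.re - z.2.re) / 2 - P.im) ^ 2 := by
    rw [Complex.sq_norm, Complex.normSq_apply, rhoC_re, rhoC_im, hP]
    simp
    ring
  have e2 : ‖wn - ctr‖ ^ 2
      = (wn.re - (z.2.re + 2 * P.im)) ^ 2
        + (wn.im - (2 * P.re - z.2.im + 2 * rho z / K)) ^ 2 := by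
    rw [Complex.sq_norm, Complex.normSq_apply, hctr]
    simp [Complex.mul_re, Complex.mul_im]
    ring
  have e3 : ∑ j, ‖w₁ j - z.1 j‖ ^ 2
      = (∑ j, ‖w₁ j‖ ^ 2) + (∑ j, ‖z.1 j‖ ^ 2) - 2 * P.re := by
    rw [hP]; exact sum_abs_sub_sq w₁ z.1
  have hρ : rho z = z.2.im - ∑ j, ‖z.1 j‖ ^ 2 := rfl
  have hρw : rho (w₁, wn) = wn.im - ∑ j, ‖w₁ j‖ ^ 2 := rfl
  have key := star_id wn.re wn.im z.2.re z.2.im P.re P.im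
      (∑ j, ‖w₁ j‖ ^ 2) (∑ j, ‖z.1 j‖ ^ 2) K hK.ne'
  have main : rho z * rho (w₁, wn) - K * ‖rhoC z (w₁, wn)‖ ^ 2
      = K / 4 * (R2 - ‖wn - ctr‖ ^ 2) := by
    rw [e1, e2, hρ, hρw, hR2, e3, hρ]
    linear_combination key
  simp only [Set.mem_setOf_eq, Metric.mem_ball, Complex.dist_eq]
  rw [Real.lt_sqrt (norm_nonneg _)]
  constructor
  · intro h
    have h4 : 0 < K / 4 * (R2 - ‖wn - ctr‖ ^ 2) := by linarith [main]
    have h5 : ‖wn - ctr‖ ^ 2 < R2 := by nlinarith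
    exact lt_of_lt_of_le h5 (le_max_left _ _)
  · intro h
    have h5 : ‖wn - ctr‖ ^ 2 < R2 := by
      rcases le_or_gt R2 0 with hR | hR
      · rw [max_eq_right hR] at h
        nlinarith [sq_nonneg (‖wn - ctr‖)]
      · rwa [max_eq_left hR.le] at h
    nlinarith [main, hK]

lemma lintegral_pi_one (m : ℕ) (A : ℝ) :
    ∫⁻ v : Fin m → ℂ, ENNReal.ofReal (max (A - ∑ j, ‖v j‖ ^ 2) 0) =
      ENNReal.ofReal (Real.pi ^ m / ((m + 1).factorial : ℝ) * max A 0 ^ (m + 1)) := by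
  have := lintegral_pi_max m 0 A
  simp only [zero_add, pow_one, Nat.factorial_one, Nat.cast_one] at this
  rw [show m + 0 + 1 = m + 1 by omega] at this
  simpa using this


lemma bBall_eq {m : ℕ} (z : (Fin m → ℂ) × ℂ) (hz : z ∈ Siegel m) {r : ℝ} (hr : 0 < r) :
    bBall z r = {w : (Fin m → ℂ) × ℂ |
      (1 - Real.tanh r ^ 2) * ‖rhoC z w‖ ^ 2 < rho z * rho w} := by
  obtain ⟨ht0, ht1⟩ := tanh_pos_lt_one hr
  have hρz : 0 < rho z := sub_pos.2 hz
  have hK : 0 < 1 - Real.tanh r ^ 2 := by nlinarith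
  ext w
  simp only [bBall, Set.mem_setOf_eq, Set.mem_sep_iff]
  constructor
  · rintro ⟨hw, hd⟩
    have hρw : 0 < rho w := sub_pos.2 hw
    obtain ⟨hle, habs⟩ := fund_ineq z w hρz hρw
    have hs0 : 0 ≤ 1 - rho z * rho w / ‖rhoC z w‖ ^ 2 := by
      rw [sub_nonneg]
      exact (div_le_one habs).2 hle
    have hs1 : 1 - rho z * rho w / ‖rhoC z w‖ ^ 2 < 1 := by
      have : 0 < rho z * rho w / ‖rhoC z w‖ ^ 2 :=
        div_pos (mul_pos hρz hρw) habs
      linarith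
    have := (artanhR_lt_iff hs0 hs1 hr).1 hd
    have h2 : 1 - Real.tanh r ^ 2 < rho z * rho w / ‖rhoC z w‖ ^ 2 := by linarith
    calc (1 - Real.tanh r ^ 2) * ‖rhoC z w‖ ^ 2
        < rho z * rho w / ‖rhoC z w‖ ^ 2 * ‖rhoC z w‖ ^ 2 := by
          exact mul_lt_mul_of_pos_right h2 habs
      _ = rho z * rho w := div_mul_cancel₀ _ habs.ne'
  · intro hS
    have hpos : 0 < rho z * rho w :=
      lt_of_le_of_lt (mul_nonneg hK.le (sq_nonneg _)) hS
    have hρw : 0 < rho w := by nlinarith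
    refine ⟨sub_pos.1 hρw, ?_⟩
    obtain ⟨hle, habs⟩ := fund_ineq z w hρz hρw
    have hs0 : 0 ≤ 1 - rho z * rho w / ‖rhoC z w‖ ^ 2 := by
      rw [sub_nonneg]; exact (div_le_one habs).2 hle
    have hs1 : 1 - rho z * rho w / ‖rhoC z w‖ ^ 2 < 1 := by
      have : 0 < rho z * rho w / ‖rhoC z w‖ ^ 2 :=
        div_pos hpos habs
      linarith
    apply (artanhR_lt_iff hs0 hs1 hr).2
    have h2 : 1 - Real.tanh r ^ 2 < rho z * rho w / ‖rhoC z w‖ ^ 2 :=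
      (lt_div_iff₀ habs).2 hS
    linarith

theorem volume_bBall (m : ℕ) (z : (Fin m → ℂ) × ℂ) (hz : z ∈ Siegel m) (r : ℝ) (hr : 0 < r) :
    volume (bBall z r) =
      ENNReal.ofReal (4 * Real.pi ^ (m + 1) / (Nat.factorial (m + 1)) *
        Real.tanh r ^ (2 * (m + 1)) / (1 - Real.tanh r ^ 2) ^ (m + 2) * rho z ^ (m + 2)) := by
  obtain ⟨ht0, ht1⟩ := tanh_pos_lt_one hr
  have hρ : 0 < rho z := sub_pos.2 hz
  set t : ℝ := Real.tanh r with htdef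
  set K : ℝ := 1 - t ^ 2 with hKdef
  have hK : 0 < K := by nlinarith
  set A0 : ℝ := (1 - K) * rho z / K with hA0def
  have hA0 : 0 < A0 := by
    apply div_pos _ hK
    apply mul_pos _ hρ
    nlinarith
  rw [bBall_eq z hz hr, ← hKdef]
  -- continuity
  have hrc : Continuous fun w : (Fin m → ℂ) × ℂ => rhoC z w := by
    unfold rhoC
    apply Continuous.sub
    · exact continuous_const.mul ((Complex.continuous_conj.comp continuous_snd).sub
        continuous_const)
    · apply continuous_finset_sum
      intro j _
      exact continuous_const.mul (Complex.continuous_conj.comp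
        ((continuous_apply j).comp continuous_fst))
  have hrho : Continuous fun w : (Fin m → ℂ) × ℂ => rho w := by
    unfold rho
    apply Continuous.sub
    · exact Complex.continuous_im.comp continuous_snd
    · apply continuous_finset_sum
      intro j _
      exact (continuous_norm.comp ((continuous_apply j).comp continuous_fst)).pow 2
  have hSopen : IsOpen {w : (Fin m → ℂ) × ℂ |
      K * ‖rhoC z w‖ ^ 2 < rho z * rho w} :=
    isOpen_lt (continuous_const.mul ((continuous_norm.comp hrc).pow 2))
      (continuous_const.mul hrho)
  rw [MeasureTheory.Measure.volume_eq_prod, Measure.prod_apply hSopen.measurableSet]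
  have hslice : ∀ w₁ : Fin m → ℂ,
      (Prod.mk w₁ ⁻¹' {w : (Fin m → ℂ) × ℂ | K * ‖rhoC z w‖ ^ 2 < rho z * rho w})
        = Metric.ball (starRingEnd ℂ z.2
            + 2 * Complex.I * (starRingEnd ℂ (∑ j, z.1 j * starRingEnd ℂ (w₁ j)))
            + ((2 * rho z / K : ℝ) : ℂ) * Complex.I)
          (Real.sqrt (max ((4 * rho z / K) *
            (A0 - ∑ j, ‖w₁ j - z.1 j‖ ^ 2)) 0)) := by
    intro w₁
    rw [show Prod.mk w₁ ⁻¹' {w : (Fin m → ℂ) × ℂ |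
        K * ‖rhoC z w‖ ^ 2 < rho z * rho w}
      = {wn : ℂ | K * ‖rhoC z (w₁, wn)‖ ^ 2 < rho z * rho (w₁, wn)} from rfl]
    exact slice_eq z hK w₁ _ _ _ rfl rfl (by rw [hA0def])
  simp_rw [hslice, Complex.volume_ball]
  have hball : ∀ w₁ : Fin m → ℂ,
      (ENNReal.ofReal (Real.sqrt (max ((4 * rho z / K) *
          (A0 - ∑ j, ‖w₁ j - z.1 j‖ ^ 2)) 0)) ^ 2 * (NNReal.pi : ℝ≥0∞))
      = ENNReal.ofReal (Real.pi * (4 * rho z / K))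
          * ENNReal.ofReal (max (A0 - ∑ j, ‖w₁ j - z.1 j‖ ^ 2) 0) := by
    intro w₁
    rw [← ENNReal.ofReal_pow (Real.sqrt_nonneg _), Real.sq_sqrt (le_max_right _ _)]
    have hC : (0:ℝ) ≤ 4 * rho z / K := by positivity
    have hmax : ∀ x : ℝ, max ((4 * rho z / K) * x) 0 = (4 * rho z / K) * max x 0 := by
      intro x
      rw [mul_max_of_nonneg _ _ hC, mul_zero]
    rw [hmax]
    have : ((NNReal.pi : ℝ≥0) : ℝ≥0∞) = ENNReal.ofReal Real.pi := by
      rw [← NNReal.coe_real_pi, ENNReal.ofReal_coe_nnreal]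
    rw [this, ← ENNReal.ofReal_mul (by positivity), ← ENNReal.ofReal_mul (by positivity)]
    congr 1
    ring
  simp_rw [hball]
  rw [lintegral_const_mul]
  · have htrans : ∫⁻ w₁ : Fin m → ℂ,
        ENNReal.ofReal (max (A0 - ∑ j, ‖w₁ j - z.1 j‖ ^ 2) 0)
        = ∫⁻ v : Fin m → ℂ, ENNReal.ofReal (max (A0 - ∑ j, ‖v j‖ ^ 2) 0) := by
      have := lintegral_sub_right_eq_self (μ := (volume : Measure (Fin m → ℂ)))
        (fun v : Fin m → ℂ => ENNReal.ofReal (max (A0 - ∑ j, ‖v j‖ ^ 2) 0)) z.1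
      rw [← this]
      apply lintegral_congr
      intro w₁
      simp [Pi.sub_apply]
    rw [htrans, lintegral_pi_one, max_eq_left hA0.le,
      ← ENNReal.ofReal_mul (by positivity)]
    congr 1
    have hfac : ((m + 1).factorial : ℝ) ≠ 0 := by positivity
    rw [hA0def, hKdef]
    have h2 : t ^ (2 * (m + 1)) = (t ^ 2) ^ (m + 1) := by rw [pow_mul]
    rw [h2]
    have hK' : (1 - t ^ 2) ≠ 0 := by rw [← hKdef]; exact hK.ne'
    field_simp
    have hu : (1 - t ^ 2)⁻¹ * (1 - t ^ 2) = 1 := inv_mul_cancel₀ hK'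
    have hm : (1 - t ^ 2)⁻¹ ^ m * (1 - t ^ 2) ^ m = 1 := by
      rw [← mul_pow, hu, one_pow]
    linear_combination
      (Real.pi * Real.pi ^ m * rho z ^ 2 * rho z ^ m * t ^ 2 * t ^ (m * 2) * (1 - t ^ 2)
        * (1 - t ^ 2)⁻¹ * (1 - t ^ 2)) * hm
      + (Real.pi * Real.pi ^ m * rho z ^ 2 * rho z ^ m * t ^ 2 * t ^ (m * 2) * (1 - t ^ 2)) * hu
  · apply Measurable.ennreal_ofReal
    apply Measurable.max _ measurable_const
    apply Measurable.const_sub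
    apply Finset.measurable_sum
    intro j _
    exact ((continuous_norm.comp ((continuous_apply j).sub continuous_const)).measurable).pow measurable_const
end
end
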